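/- Multiplication theorem for the second derivative of Hurwitz zeta at 0: for every integer m ≥ 2, ∑_{l=1}^{m-1} ζ''(0, l/m) = -(1/2)·ln² m - ln m · ln(2π), where ζ''(0,v) denotes the second derivative of s ↦ ζ(s,v) evaluated at s = 0. -/

import Mathlib

open Real Finset Complex HurwitzZeta

open Filter Metric in
private lemma zeta_eq_aux : ∀ s ∈ Metric.ball (0:ℂ) 1,
    riemannZeta s = (s * completedRiemannZeta₀ s - 1 - s / (1 - s)) * (π : ℂ) ^ (s / 2) /
      (2 * Complex.Gamma (1 + s / 2)) := by
  intro s hs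
  rw [mem_ball, dist_zero_right] at hs
  rcases eq_or_ne s 0 with rfl | h0
  · simp [riemannZeta_zero, Complex.Gamma_one]
  · have hs1 : (1:ℂ) - s ≠ 0 := by
      intro h
      rw [sub_eq_zero] at h
      rw [← h] at hs
      simp at hs
    have hpi : (π:ℂ) ≠ 0 := by
      simpa using Real.pi_ne_zero
    have hG : Complex.Gamma (s/2) ≠ 0 := by
      rw [Ne, Complex.Gamma_eq_zero_iff]
      rintro ⟨n, hn⟩
      have hsn : s = -(2 * n : ℂ) := by
        field_simp at hn
        rw [hn]
      rcases Nat.eq_zero_or_pos n with rfl | hn'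
      · simp [hsn] at h0
      · rw [hsn] at hs
        have : (1:ℝ) ≤ ‖(-(2 * n : ℂ))‖ := by
          rw [norm_neg]
          calc (1:ℝ) ≤ 2 * n := by exact_mod_cast Nat.one_le_iff_ne_zero.mpr (by positivity)
          _ = ‖((2 * n : ℕ) : ℂ)‖ := by
              rw [Complex.norm_natCast]; push_cast; ring
          _ = ‖(2 * (n:ℂ))‖ := by push_cast; ring_nf
        linarith
    have hGadd : Complex.Gamma (1 + s/2) = (s/2) * Complex.Gamma (s/2) := by
      rw [add_comm]
      exact Complex.Gamma_add_one _ (by simpa using h0)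
    have hcpne : (π:ℂ) ^ (s/2) ≠ 0 := by
      intro h
      have := Complex.cpow_natCast (π:ℂ) 0 -- dummy
      have h1 : (π:ℂ) ^ (s/2) * (π:ℂ) ^ (-(s/2)) = 1 := by
        rw [← Complex.cpow_add _ _ hpi]; simp
      rw [h, zero_mul] at h1
      simp at h1
    have hcp : (π:ℂ) ^ (-s/2) = ((π:ℂ) ^ (s/2))⁻¹ := by
      rw [neg_div, Complex.cpow_neg]
    rw [riemannZeta_def_of_ne_zero h0, completedRiemannZeta_eq, Gammaℝ_def, hGadd, hcp]
    field_simp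

private lemma hasDerivAt_zeta_zero :
    HasDerivAt riemannZeta (-(Real.log (2 * π) : ℂ) / 2) 0 := by
  have hpi : (π:ℂ) ≠ 0 := by simpa using Real.pi_ne_zero
  -- derivative of N
  have h1 : HasDerivAt (fun s : ℂ => s * completedRiemannZeta₀ s) (completedRiemannZeta₀ 0) 0 := by
    have := (hasDerivAt_id (0:ℂ)).fun_mul (differentiable_completedZeta₀ 0).hasDerivAt
    simpa using this
  have h2 : HasDerivAt (fun s : ℂ => s / (1 - s)) 1 0 := by
    have := (hasDerivAt_id (0:ℂ)).fun_div ((hasDerivAt_const (0:ℂ) (1:ℂ)).fun_sub (hasDerivAt_id 0)) (by norm_num)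
    simpa using this
  have hN : HasDerivAt (fun s : ℂ => s * completedRiemannZeta₀ s - 1 - s / (1 - s))
      (completedRiemannZeta₀ 0 - 1) 0 := (h1.sub_const 1).sub h2
  have hE : HasDerivAt (fun s : ℂ => (π:ℂ) ^ (s / 2)) (Complex.log π / 2) 0 := by
    have := ((hasDerivAt_id (0:ℂ)).div_const 2).const_cpow (c := (π:ℂ)) (Or.inl hpi)
    simpa [mul_comm, mul_assoc, div_eq_mul_inv] using this
  have hGi : HasDerivAt (fun s : ℂ => 1 + s / 2) (1/2 : ℂ) 0 := by
    simpa using ((hasDerivAt_id (0:ℂ)).div_const 2).const_add 1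
  have hG0 : HasDerivAt Complex.Gamma (-(Real.eulerMascheroniConstant : ℂ)) (1 + (0:ℂ)/2) := by
    simpa using Complex.hasDerivAt_Gamma_one
  have hG : HasDerivAt (fun s : ℂ => 2 * Complex.Gamma (1 + s / 2))
      (-(Real.eulerMascheroniConstant : ℂ)) 0 := by
    have := (hG0.comp 0 hGi).const_mul 2
    have e : (2 : ℂ) * (-(Real.eulerMascheroniConstant : ℂ) * (1/2)) = -(Real.eulerMascheroniConstant : ℂ) := by ring
    rw [e] at this
    exact this
  have hGne : (fun s : ℂ => 2 * Complex.Gamma (1 + s / 2)) 0 ≠ 0 := by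
    simp [Complex.Gamma_one]
  have hfeq : riemannZeta =ᶠ[nhds (0:ℂ)]
      (fun s : ℂ => (s * completedRiemannZeta₀ s - 1 - s / (1 - s)) * (π : ℂ) ^ (s / 2) /
        (2 * Complex.Gamma (1 + s / 2))) := by
    filter_upwards [Metric.ball_mem_nhds (0:ℂ) one_pos] with s hs
    exact zeta_eq_aux s hs
  have key := ((hN.fun_mul hE).fun_div hG hGne).congr_of_eventuallyEq hfeq
  have hL0 : completedRiemannZeta₀ 0 =
      ((Real.eulerMascheroniConstant : ℂ) - Complex.log (4 * π)) / 2 + 1 := by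
    have := completedRiemannZeta₀_one_sub 1
    rw [sub_self] at this
    rw [this, completedRiemannZeta₀_one]
  have hlog4 : Complex.log (4 * (π:ℂ)) = ((Real.log (4 * π) : ℝ) : ℂ) := by
    rw [Complex.ofReal_log (by positivity)]
    push_cast
    ring_nf
  have hlogpi : Complex.log (π:ℂ) = ((Real.log π : ℝ) : ℂ) := by
    rw [Complex.ofReal_log Real.pi_pos.le]
  have hrlog : Real.log (4 * π) + Real.log π = 2 * Real.log (2 * π) := by
    rw [← Real.log_mul (by positivity) (by positivity),
      show (4*π)*π = (2*π)^2 by ring, Real.log_pow]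
    push_cast
    ring
  refine key.congr_deriv (Eq.symm ?_)
  simp only [Complex.Gamma_one, zero_div, zero_mul, zero_sub, sub_zero, zero_add,
    Complex.cpow_zero, hL0, hlog4, hlogpi]
  have hc : ((Real.log (4*π) : ℝ) : ℂ) + ((Real.log π : ℝ) : ℂ) = 2 * ((Real.log (2*π) : ℝ) : ℂ) := by
    exact_mod_cast congrArg (fun x : ℝ => (x : ℂ)) hrlog
  simp only [add_zero, Complex.Gamma_one]
  linear_combination (1/4 : ℂ) * hc


open Filter in
private lemma LFunction_const_one (m : ℕ) [NeZero m] {s : ℂ} (hs : s ≠ 1) :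
    ZMod.LFunction (fun _ : ZMod m => 1) s = riemannZeta s := by
  have hpc : IsPreconnected ({1}ᶜ : Set ℂ) :=
    (isConnected_compl_singleton_of_one_lt_rank (rank_real_complex ▸ Nat.one_lt_ofNat) _)
      |>.isPreconnected
  have hne : (2:ℂ) ∈ ({1}ᶜ : Set ℂ) := by norm_num
  refine AnalyticOnNhd.eqOn_of_preconnected_of_eventuallyEq (𝕜 := ℂ)
    (g := riemannZeta) ?_ ?_ hpc hne ?_ hs
  · refine DifferentiableOn.analyticOnNhd (fun t ht => ?_) isOpen_compl_singleton
    exact (ZMod.differentiableAt_LFunction _ _ (.inl ht)).differentiableWithinAt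
  · refine DifferentiableOn.analyticOnNhd (fun t ht => ?_) isOpen_compl_singleton
    exact (differentiableAt_riemannZeta ht).differentiableWithinAt
  · refine eventually_of_mem ?_ (fun t (ht : 1 < t.re) => ?_)
    · exact (continuous_re.isOpen_preimage _ isOpen_Ioi).mem_nhds (by norm_num : 1 < (2:ℂ).re)
    · rw [ZMod.LFunction_eq_LSeries _ ht, ← LSeries_one_eq_riemannZeta ht]
      rfl

private lemma sum_hurwitzZeta_eq (m : ℕ) (hm : 2 ≤ m) {s : ℂ} (hs : s ≠ 1) :
    ∑ l ∈ Finset.Icc 1 (m - 1), hurwitzZeta ((l / m : ℝ) : UnitAddCircle) s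
      = ((m:ℂ) ^ s - 1) * riemannZeta s := by
  have : NeZero m := ⟨by omega⟩
  have hmne : ((m:ℕ):ℂ) ≠ 0 := Nat.cast_ne_zero.mpr (by omega)
  have key := LFunction_const_one m hs
  rw [ZMod.LFunction] at key
  simp only [one_mul] at key
  have hre : ∑ j : ZMod m, hurwitzZeta (ZMod.toAddCircle j) s
      = ∑ l ∈ Finset.range m, hurwitzZeta ((l / m : ℝ) : UnitAddCircle) s := by
    refine Finset.sum_nbij' (fun j : ZMod m => j.val) (fun l : ℕ => (l : ZMod m))
      (fun j _ => Finset.mem_range.mpr j.val_lt) (fun l _ => Finset.mem_univ _)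
      (fun j _ => ZMod.natCast_rightInverse j) (fun l hl => ZMod.val_cast_of_lt (Finset.mem_range.mp hl))
      (fun j _ => ?_)
    rw [ZMod.toAddCircle_apply]
  have hsplit : Finset.range m = insert 0 (Finset.Icc 1 (m - 1)) := by
    ext x
    simp only [Finset.mem_range, Finset.mem_insert, Finset.mem_Icc]
    omega
  have h0 : (0:ℕ) ∉ Finset.Icc 1 (m - 1) := by simp
  rw [hre, hsplit, Finset.sum_insert h0] at key
  have hz : hurwitzZeta (((0:ℕ) / m : ℝ) : UnitAddCircle) s = riemannZeta s := by
    norm_num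
    rw [hurwitzZeta_zero]
  rw [hz] at key
  have h2 : (m:ℂ) ^ s * ((m:ℂ) ^ (-s) *
      (riemannZeta s + ∑ l ∈ Finset.Icc 1 (m - 1), hurwitzZeta ((l / m : ℝ) : UnitAddCircle) s))
      = (m:ℂ) ^ s * riemannZeta s := by rw [key]
  rw [← mul_assoc, ← Complex.cpow_add _ _ hmne] at h2
  simp only [add_neg_cancel, Complex.cpow_zero, one_mul] at h2
  linear_combination h2


open Filter in
theorem stmt19 (m : ℕ) (hm : 2 ≤ m) :
    (∑ l ∈ Finset.Icc 1 (m - 1),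
        iteratedDeriv 2 (fun s : ℂ => hurwitzZeta ((l / m : ℝ) : UnitAddCircle) s) 0) =
      ((-(1 / 2) * Real.log m ^ 2 - Real.log m * Real.log (2 * π) : ℝ) : ℂ) := by
  have hmz : NeZero m := ⟨by omega⟩
  have hmne : ((m:ℕ):ℂ) ≠ 0 := Nat.cast_ne_zero.mpr (by omega)
  set L : ℂ := ((Real.log m : ℝ) : ℂ) with hLdef
  have hlogm : Complex.log ((m:ℕ):ℂ) = L := by
    rw [hLdef, show ((m:ℕ):ℂ) = (((m:ℕ):ℝ):ℂ) by push_cast; ring,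
      ← Complex.ofReal_log (Nat.cast_nonneg m)]
  have h01 : (0:ℂ) ∈ ({1}ᶜ : Set ℂ) := by norm_num
  have hnhds : ({1}ᶜ : Set ℂ) ∈ nhds (0:ℂ) := isOpen_compl_singleton.mem_nhds h01
  have hanal : ∀ l : ℕ, AnalyticOnNhd ℂ
      (fun s : ℂ => hurwitzZeta ((l / m : ℝ) : UnitAddCircle) s) {(1:ℂ)}ᶜ :=
    fun l => DifferentiableOn.analyticOnNhd
      (fun t ht => (differentiableAt_hurwitzZeta _ ht).differentiableWithinAt)
      isOpen_compl_singleton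
  have hzeta_anal : AnalyticOnNhd ℂ riemannZeta {(1:ℂ)}ᶜ :=
    DifferentiableOn.analyticOnNhd
      (fun t ht => (differentiableAt_riemannZeta ht).differentiableWithinAt)
      isOpen_compl_singleton
  have hit : ∀ (f : ℂ → ℂ), iteratedDeriv 2 f (0:ℂ) = deriv (deriv f) 0 := by
    intro f
    rw [iteratedDeriv_succ, iteratedDeriv_one]
  simp only [hit]
  have e1 : ∑ l ∈ Finset.Icc 1 (m-1),
      deriv (deriv (fun s : ℂ => hurwitzZeta ((l / m : ℝ) : UnitAddCircle) s)) 0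
      = deriv (deriv (fun s : ℂ => ((m:ℂ) ^ s - 1) * riemannZeta s)) 0 := by
    have hd1 : ∀ l ∈ Finset.Icc 1 (m-1), DifferentiableAt ℂ
        (deriv (fun s : ℂ => hurwitzZeta ((l / m : ℝ) : UnitAddCircle) s)) 0 :=
      fun l _ => ((hanal l).deriv 0 h01).differentiableAt
    rw [← deriv_fun_sum hd1]
    have e2 : (fun y : ℂ => ∑ l ∈ Finset.Icc 1 (m-1),
        deriv (fun s : ℂ => hurwitzZeta ((l / m : ℝ) : UnitAddCircle) s) y)
        =ᶠ[nhds (0:ℂ)]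
        deriv (fun y : ℂ => ∑ l ∈ Finset.Icc 1 (m-1),
          hurwitzZeta ((l / m : ℝ) : UnitAddCircle) y) := by
      filter_upwards [hnhds] with t ht
      rw [deriv_fun_sum (fun l _ => ((hanal l) t ht).differentiableAt)]
    rw [e2.deriv_eq]
    have e3 : (fun y : ℂ => ∑ l ∈ Finset.Icc 1 (m-1),
        hurwitzZeta ((l / m : ℝ) : UnitAddCircle) y)
        =ᶠ[nhds (0:ℂ)] (fun s : ℂ => ((m:ℂ) ^ s - 1) * riemannZeta s) := by
      filter_upwards [hnhds] with t ht
      exact sum_hurwitzZeta_eq m hm ht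
    rw [(e3.deriv).deriv_eq]
  rw [e1]
  have hgphi : deriv (fun s : ℂ => ((m:ℂ) ^ s - 1) * riemannZeta s)
      =ᶠ[nhds (0:ℂ)]
      (fun s : ℂ => ((m:ℂ) ^ s * L) * riemannZeta s + ((m:ℂ) ^ s - 1) * deriv riemannZeta s) := by
    filter_upwards [hnhds] with t ht
    have hc : HasDerivAt (fun s : ℂ => (m:ℂ) ^ s) ((m:ℂ) ^ t * L) t := by
      have := (hasDerivAt_id t).const_cpow (c := ((m:ℕ):ℂ)) (Or.inl hmne)
      simpa [hlogm] using this
    have hz : HasDerivAt riemannZeta (deriv riemannZeta t) t :=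
      (differentiableAt_riemannZeta ht).hasDerivAt
    exact ((hc.sub_const 1).mul hz).deriv
  rw [hgphi.deriv_eq]
  have hzd : HasDerivAt riemannZeta (-(Real.log (2 * π) : ℂ) / 2) 0 := hasDerivAt_zeta_zero
  have hz2 : HasDerivAt (deriv riemannZeta) (deriv (deriv riemannZeta) 0) 0 :=
    ((hzeta_anal.deriv) 0 h01).differentiableAt.hasDerivAt
  have hc0 : HasDerivAt (fun s : ℂ => (m:ℂ) ^ s) ((m:ℂ) ^ (0:ℂ) * L) 0 := by
    have := (hasDerivAt_id (0:ℂ)).const_cpow (c := ((m:ℕ):ℂ)) (Or.inl hmne)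
    simpa [hlogm] using this
  have ht1 : HasDerivAt (fun s : ℂ => (m:ℂ) ^ s * L) (((m:ℂ) ^ (0:ℂ) * L) * L) 0 :=
    hc0.mul_const L
  have hphi : HasDerivAt
      (fun s : ℂ => ((m:ℂ) ^ s * L) * riemannZeta s + ((m:ℂ) ^ s - 1) * deriv riemannZeta s)
      ((((m:ℂ) ^ (0:ℂ) * L) * L) * riemannZeta 0
        + ((m:ℂ) ^ (0:ℂ) * L) * (-(Real.log (2 * π) : ℂ) / 2)
        + (((m:ℂ) ^ (0:ℂ) * L) * deriv riemannZeta 0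
          + ((m:ℂ) ^ (0:ℂ) - 1) * deriv (deriv riemannZeta) 0)) 0 :=
    (ht1.mul hzd).add ((hc0.sub_const 1).mul hz2)
  rw [hphi.deriv, hzd.deriv, riemannZeta_zero]
  simp only [Complex.cpow_zero, one_mul, hLdef]
  push_cast
  ring
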